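/- For every natural number n ≥ 1, every real d ≥ 0, and every nonempty finite subset M of 𝓜_n(d), there exists a connected graph G on 𝓜_n(d) connecting M with |G| = smt(M, 𝓜_n(d)); that is, SMT(M, 𝓜_n(d)) ≠ ∅. -/

import Mathlib

/-- A (simple) graph on a set `X`: a finite vertex set `verts ⊆ X` together with a finite
set of edges, each edge being a 2-element subset of `verts`. -/
structure GraphOn (X : Type*) where
  verts : Finset X
  edges : Finset (Sym2 X)
  mem_verts_of_mem_edges : ∀ e ∈ edges, ∀ x ∈ e, x ∈ verts
  not_isDiag : ∀ e ∈ edges, ¬ e.IsDiag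

/-- Two points are adjacent in `G` if they form an edge of `G`. -/
def GraphOn.Adj {X : Type*} (G : GraphOn X) (x y : X) : Prop := s(x, y) ∈ G.edges

/-- A graph on `X` is connected if its vertex set is nonempty and any two of its vertices
are joined by a path of edges. -/
def GraphOn.IsConnected {X : Type*} (G : GraphOn X) : Prop :=
  G.verts.Nonempty ∧ ∀ x ∈ G.verts, ∀ y ∈ G.verts, Relation.ReflTransGen G.Adj x y

/-- A graph on `X` is acyclic if it contains no cycle, i.e. no injective circular sequence
of at least three vertices with consecutive members adjacent. -/
def GraphOn.IsAcyclic {X : Type*} (G : GraphOn X) : Prop :=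
  ¬ ∃ (k : ℕ) (v : ZMod k → X), 3 ≤ k ∧ Function.Injective v ∧ ∀ i, G.Adj (v i) (v (i + 1))

/-- A tree on `X` is a connected acyclic graph on `X`. -/
def GraphOn.IsTree {X : Type*} (G : GraphOn X) : Prop := G.IsConnected ∧ G.IsAcyclic

/-- The length of a graph on a metric space: the sum of the lengths (distances between
endpoints) of all its edges. -/
noncomputable def GraphOn.length {X : Type*} [MetricSpace X] (G : GraphOn X) : ℝ :=
  ∑ e ∈ G.edges, Sym2.lift ⟨fun x y => dist x y, fun _ _ => dist_comm _ _⟩ e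

/-- A graph `G` on `X` connects a finite set `M ⊆ X` if `G` is connected and all points of `M`
are vertices of `G`. -/
def GraphOn.Connects {X : Type*} (G : GraphOn X) (M : Finset X) : Prop :=
  G.IsConnected ∧ ∀ m ∈ M, m ∈ G.verts

/-- The length of a Steiner minimal tree on a finite subset `M` of a metric space `X`:
the infimum of lengths of connected graphs on `X` connecting `M`. -/
noncomputable def smt (X : Type*) [MetricSpace X] (M : Finset X) : ℝ :=
  sInf {l : ℝ | ∃ G : GraphOn X, G.Connects M ∧ l = G.length}

namespace SteinerAux

open Finset Relation

variable {X : Type*}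

lemma sym2_dist_nonneg [MetricSpace X] (e : Sym2 X) :
    0 ≤ Sym2.lift ⟨fun x y => dist x y, fun _ _ => dist_comm _ _⟩ e := by
  induction e using Sym2.ind with
  | _ x y => simp [dist_nonneg]

noncomputable def glen [MetricSpace X] (E : Finset (Sym2 X)) : ℝ :=
  ∑ e ∈ E, Sym2.lift ⟨fun x y => dist x y, fun _ _ => dist_comm _ _⟩ e

lemma glen_nonneg [MetricSpace X] (E : Finset (Sym2 X)) : 0 ≤ glen E :=
  Finset.sum_nonneg fun e _ => sym2_dist_nonneg e

lemma glen_mono [MetricSpace X] {E E' : Finset (Sym2 X)} (h : E ⊆ E') : glen E ≤ glen E' :=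
  Finset.sum_le_sum_of_subset_of_nonneg h fun e _ _ => sym2_dist_nonneg e

lemma glen_erase [MetricSpace X] [DecidableEq (Sym2 X)] {E : Finset (Sym2 X)} {x y : X}
    (h : s(x, y) ∈ E) : glen (E.erase s(x, y)) = glen E - dist x y := by
  have hs := Finset.add_sum_erase E
    (fun e => Sym2.lift ⟨fun x y => dist x y, fun _ _ => dist_comm _ _⟩ e) h
  simp only [Sym2.lift_mk] at hs
  rw [glen, glen]
  linarith

lemma glen_insert_le [MetricSpace X] [DecidableEq (Sym2 X)] (E : Finset (Sym2 X)) (x y : X) :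
    glen (insert s(x, y) E) ≤ dist x y + glen E := by
  by_cases hmem : s(x, y) ∈ E
  · rw [Finset.insert_eq_self.2 hmem]
    have := dist_nonneg (x := x) (y := y)
    linarith
  · rw [glen, Finset.sum_insert hmem]
    simp only [Sym2.lift_mk]
    rw [glen]

lemma sum_image_le' {α β : Type*} [DecidableEq β] (s : Finset α) (f : α → β)
    (g : β → ℝ) (hg : ∀ b, 0 ≤ g b) : ∑ b ∈ s.image f, g b ≤ ∑ a ∈ s, g (f a) := by
  classical
  induction s using Finset.induction_on with
  | empty => simp
  | @insert a s ha ih =>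
    rw [Finset.image_insert, Finset.sum_insert ha]
    by_cases hfa : f a ∈ s.image f
    · rw [Finset.insert_eq_self.2 hfa]
      have := hg (f a); linarith
    · rw [Finset.sum_insert hfa]; linarith

lemma swap_mem {E : Finset (Sym2 X)} {a b : X} (h : s(a, b) ∈ E) : s(b, a) ∈ E := by
  have he : s(b, a) = s(a, b) := Sym2.eq_swap
  rw [he]; exact h

lemma rtg_lift_subtype {E : Finset (Sym2 X)} {V : Finset X}
    (hEV : ∀ e ∈ E, ∀ x ∈ e, x ∈ V) {x y : X}
    (h : Relation.ReflTransGen (fun a b => s(a, b) ∈ E) x y) (hx : x ∈ V) :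
    ∀ hy : y ∈ V, Relation.ReflTransGen
      (fun a b : {z // z ∈ V} => s(a.1, b.1) ∈ E) ⟨x, hx⟩ ⟨y, hy⟩ := by
  induction h with
  | refl => intro hy; exact .refl
  | @tail b c hxb hbc ih =>
    intro hy
    have hb : b ∈ V := hEV _ hbc _ (Sym2.mem_mk_left _ _)
    exact (ih hb).tail hbc

lemma rtg_erase_leaf [DecidableEq (Sym2 X)] {E : Finset (Sym2 X)} {v a : X}
    (huniq : ∀ w, s(v, w) ∈ E → w = a) (hav : a ≠ v) {x y : X}
    (h : Relation.ReflTransGen (fun p q => s(p, q) ∈ E) x y) (hx : x ≠ v) :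
    (y ≠ v → Relation.ReflTransGen (fun p q => s(p, q) ∈ E.erase s(v, a)) x y) ∧
    (y = v → Relation.ReflTransGen (fun p q => s(p, q) ∈ E.erase s(v, a)) x a) := by
  induction h with
  | refl => exact ⟨fun _ => .refl, fun h => absurd h hx⟩
  | @tail b c hxb hbc ih =>
    constructor
    · intro hc
      by_cases hb : b = v
      · subst hb
        have hca : c = a := huniq c hbc
        subst hca
        exact ih.2 rfl
      · refine (ih.1 hb).tail (Finset.mem_erase.2 ⟨?_, hbc⟩)
        intro hcontra
        rcases Sym2.eq_iff.1 hcontra with ⟨h1, h2⟩ | ⟨h1, h2⟩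
        · exact hb h1
        · exact hc h2
    · intro hc
      subst hc
      have hb : b = a := huniq b (swap_mem hbc)
      subst hb
      exact ih.1 hav

lemma rtg_erase_deg2 [DecidableEq (Sym2 X)] {E : Finset (Sym2 X)} {v b c : X}
    (huniq : ∀ w, s(v, w) ∈ E → w = b ∨ w = c) (hbv : b ≠ v) (hcv : c ≠ v)
    {x y : X}
    (h : Relation.ReflTransGen (fun p q => s(p, q) ∈ E) x y) (hx : x ≠ v) :
    (y ≠ v → Relation.ReflTransGen
        (fun p q => s(p, q) ∈ insert s(b, c) ((E.erase s(v, b)).erase s(v, c))) x y) ∧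
    (y = v → (Relation.ReflTransGen
        (fun p q => s(p, q) ∈ insert s(b, c) ((E.erase s(v, b)).erase s(v, c))) x b ∨
      Relation.ReflTransGen
        (fun p q => s(p, q) ∈ insert s(b, c) ((E.erase s(v, b)).erase s(v, c))) x c)) := by
  induction h with
  | refl => exact ⟨fun _ => .refl, fun h => absurd h hx⟩
  | @tail u w hxu huw ih =>
    constructor
    · intro hw
      by_cases hu : u = v
      · subst hu
        rcases huniq w huw with rfl | rfl
        · rcases ih.2 rfl with h' | h'
          · exact h'
          · exact h'.tail (swap_mem (Finset.mem_insert_self _ _))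
        · rcases ih.2 rfl with h' | h'
          · exact h'.tail (Finset.mem_insert_self _ _)
          · exact h'
      · refine (ih.1 hu).tail (Finset.mem_insert.2 (Or.inr ?_))
        refine Finset.mem_erase.2 ⟨?_, Finset.mem_erase.2 ⟨?_, huw⟩⟩
        · intro hcontra
          rcases Sym2.eq_iff.1 hcontra with ⟨h1, h2⟩ | ⟨h1, h2⟩
          · exact hu h1
          · exact hw h2
        · intro hcontra
          rcases Sym2.eq_iff.1 hcontra with ⟨h1, h2⟩ | ⟨h1, h2⟩
          · exact hu h1
          · exact hw h2
    · intro hw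
      subst hw
      rcases huniq u (swap_mem huw) with rfl | rfl
      · exact Or.inl (ih.1 hbv)
      · exact Or.inr (ih.1 hcv)

lemma rtg_erase_detour [DecidableEq (Sym2 X)] {E : Finset (Sym2 X)} {p q : X}
    (hdet : Relation.ReflTransGen (fun u w => s(u, w) ∈ E.erase s(p, q)) p q)
    {x y : X} (h : Relation.ReflTransGen (fun u w => s(u, w) ∈ E) x y) :
    Relation.ReflTransGen (fun u w => s(u, w) ∈ E.erase s(p, q)) x y := by
  have hsym : Symmetric (fun u w : X => s(u, w) ∈ E.erase s(p, q)) := by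
    intro u w h'; exact swap_mem h'
  induction h with
  | refl => exact .refl
  | @tail b c hxb hbc ih =>
    by_cases he : s(b, c) = s(p, q)
    · rcases Sym2.eq_iff.1 he with ⟨rfl, rfl⟩ | ⟨rfl, rfl⟩
      · exact ih.trans hdet
      · exact ih.trans ((@Relation.ReflTransGen.stdSymm _ _ ⟨hsym⟩).symm _ _ hdet)
    · exact ih.tail (Finset.mem_erase.2 ⟨he, hbc⟩)

theorem exists_small [MetricSpace X] (M : Finset X) (hM : M.Nonempty)
    (G : GraphOn X) (hG : G.Connects M) :
    ∃ G' : GraphOn X, G'.Connects M ∧ G'.length ≤ G.length ∧ G'.verts.card ≤ 2 * M.card := by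
  classical
  let P : Finset X × Finset (Sym2 X) → Prop := fun g =>
    M ⊆ g.1 ∧ (∀ e ∈ g.2, ∀ x ∈ e, x ∈ g.1) ∧ (∀ e ∈ g.2, ¬ e.IsDiag) ∧
      ∀ x ∈ g.1, ∀ y ∈ g.1, Relation.ReflTransGen (fun a b => s(a, b) ∈ g.2) x y
  let F : Finset (Finset X × Finset (Sym2 X)) :=
    (G.verts.powerset ×ˢ G.verts.sym2.powerset).filter P
  have memF : ∀ (V' : Finset X) (E' : Finset (Sym2 X)), V' ⊆ G.verts → E' ⊆ G.verts.sym2 →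
      M ⊆ V' → (∀ e ∈ E', ∀ x ∈ e, x ∈ V') → (∀ e ∈ E', ¬e.IsDiag) →
      (∀ x ∈ V', ∀ y ∈ V', Relation.ReflTransGen (fun a b => s(a, b) ∈ E') x y) →
      (V', E') ∈ F := by
    intro V' E' h1 h2 h3 h4 h5 h6
    exact Finset.mem_filter.2 ⟨Finset.mem_product.2
      ⟨Finset.mem_powerset.2 h1, Finset.mem_powerset.2 h2⟩, h3, h4, h5, h6⟩
  have hGF : (G.verts, G.edges) ∈ F := by
    refine memF _ _ le_rfl ?_ hG.2 G.mem_verts_of_mem_edges G.not_isDiag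
      (fun x hx y hy => hG.1.2 x hx y hy)
    intro e he
    exact Finset.mem_sym2_iff.2 (G.mem_verts_of_mem_edges e he)
  obtain ⟨g₁, hg₁F, hg₁min⟩ := F.exists_min_image (fun g => glen g.2) ⟨_, hGF⟩
  obtain ⟨g₂, hg₂F2, hg₂min⟩ := (F.filter (fun g => glen g.2 ≤ glen g₁.2)).exists_min_image
    (fun g => g.1.card) ⟨g₁, Finset.mem_filter.2 ⟨hg₁F, le_rfl⟩⟩
  obtain ⟨hg₂F, hg₂len⟩ := Finset.mem_filter.1 hg₂F2
  have hP : P g₂ := (Finset.mem_filter.1 hg₂F).2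
  obtain ⟨hMV, hEV, hND, hCON⟩ := hP
  have hg₂dom := (Finset.mem_filter.1 hg₂F).1
  set V := g₂.1 with hVdef
  set E := g₂.2 with hEdef
  have hVsub : V ⊆ G.verts := Finset.mem_powerset.1 (Finset.mem_product.1 hg₂dom).1
  have hEsub : E ⊆ G.verts.sym2 := Finset.mem_powerset.1 (Finset.mem_product.1 hg₂dom).2
  have lenmin : ∀ g ∈ F, glen E ≤ glen g.2 := fun g hg => le_trans hg₂len (hg₁min g hg)
  have cardmin : ∀ g ∈ F, glen g.2 ≤ glen E → V.card ≤ g.1.card := by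
    intro g hg hlen
    exact hg₂min g (Finset.mem_filter.2 ⟨hg, le_trans hlen hg₂len⟩)
  -- the simple graph on the vertex subtype
  let H : SimpleGraph {x // x ∈ V} :=
    { Adj := fun p q => s(p.1, q.1) ∈ E
      symm := ⟨fun p q h => swap_mem h⟩
      loopless := ⟨fun p h => hND _ h (Sym2.mk_isDiag_iff.2 rfl)⟩ }
  have hAdj : ∀ p q : {x // x ∈ V}, H.Adj p q ↔ s(p.1, q.1) ∈ E := fun _ _ => Iff.rfl
  have hne : V.Nonempty := ⟨hM.choose, hMV hM.choose_spec⟩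
  have hconn : H.Connected := by
    have hnty : Nonempty {x // x ∈ V} := ⟨⟨hne.choose, hne.choose_spec⟩⟩
    refine ⟨fun p q => ?_⟩
    exact (SimpleGraph.reachable_iff_reflTransGen _ _).2
      (rtg_lift_subtype hEV (hCON p.1 p.2 q.1 q.2) p.2 q.2)
  have hE_eq : H.edgeFinset.image (Sym2.map Subtype.val) = E := by
    ext e
    constructor
    · intro he
      obtain ⟨e', he', rfl⟩ := Finset.mem_image.1 he
      rw [SimpleGraph.mem_edgeFinset] at he'
      revert he'
      induction e' using Sym2.ind with
      | _ p q =>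
        intro he'
        rw [Sym2.map_pair_eq]
        exact (SimpleGraph.mem_edgeSet H).1 he'
    · intro he
      revert he
      induction e using Sym2.ind with
      | _ x y =>
        intro he
        have hx : x ∈ V := hEV _ he _ (Sym2.mem_mk_left _ _)
        have hy : y ∈ V := hEV _ he _ (Sym2.mem_mk_right _ _)
        refine Finset.mem_image.2 ⟨s(⟨x, hx⟩, ⟨y, hy⟩), ?_, by rw [Sym2.map_pair_eq]⟩
        exact SimpleGraph.mem_edgeFinset.2 ((SimpleGraph.mem_edgeSet H).2 he)
  have hcardE : H.edgeFinset.card = E.card := by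
    have h := Finset.card_image_of_injective H.edgeFinset
      (Sym2.map.injective Subtype.val_injective)
    rw [hE_eq] at h
    exact h.symm
  -- every edge is a bridge, via length minimality
  have hbridge : ∀ e ∈ H.edgeSet, H.IsBridge e := by
    intro e he
    revert he
    induction e using Sym2.ind with
    | _ p q =>
      intro he
      rw [SimpleGraph.isBridge_iff]
      refine fun hreach => ?_
      have hpq : s(p.1, q.1) ∈ E := he
      have hdet : Relation.ReflTransGen
          (fun u w => s(u, w) ∈ E.erase s(p.1, q.1)) p.1 q.1 := by
        have hr := (SimpleGraph.reachable_iff_reflTransGen _ _).1 hreach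
        refine Relation.ReflTransGen.lift Subtype.val ?_ _ _ hr
        intro a b hab
        rw [SimpleGraph.deleteEdges_adj] at hab
        have hne' : s(a, b) ≠ s(p, q) := fun hh => hab.2 (by simp [hh])
        refine Finset.mem_erase.2 ⟨?_, hab.1⟩
        intro hh
        exact hne' (Sym2.map.injective Subtype.val_injective
          (by rwa [Sym2.map_pair_eq, Sym2.map_pair_eq]))
      have hmem : (V, E.erase s(p.1, q.1)) ∈ F := by
        refine memF _ _ hVsub (le_trans (Finset.erase_subset _ _) hEsub) hMV
          (fun e he' x hx => hEV e (Finset.mem_of_mem_erase he') x hx)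
          (fun e he' => hND e (Finset.mem_of_mem_erase he'))
          (fun x hx y hy => rtg_erase_detour hdet (hCON x hx y hy))
      have hlt : glen (E.erase s(p.1, q.1)) < glen E := by
        have hdpos : (0 : ℝ) < dist p.1 q.1 := by
          rw [dist_pos]
          intro hh
          exact hND _ hpq (Sym2.mk_isDiag_iff.2 hh)
        have := glen_erase hpq
        linarith
      exact absurd (lenmin _ hmem) (not_le.2 hlt)
  have htree : H.IsTree := ⟨hconn, SimpleGraph.isAcyclic_iff_forall_edge_isBridge.2 hbridge⟩
  have hcount : H.edgeFinset.card + 1 = V.card := by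
    have := htree.card_edgeFinset
    rwa [Fintype.card_coe] at this
  have hfinal : V.card ≤ 2 * M.card := by
    by_cases ht : V.card ≤ 1
    · have := hM.card_pos
      omega
    · push_neg at ht
      have hdegpos : ∀ a : {x // x ∈ V}, 0 < H.degree a := by
        intro a
        obtain ⟨b, hbV, hba⟩ := Finset.exists_mem_ne ht a.1
        rcases Relation.ReflTransGen.cases_head (hCON a.1 a.2 b hbV) with heq | ⟨z, hz, _⟩
        · exact absurd heq.symm hba
        · have hzV : z ∈ V := hEV _ hz _ (Sym2.mem_mk_right _ _)
          rw [SimpleGraph.degree_pos_iff_exists_adj]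
          exact ⟨⟨z, hzV⟩, hz⟩
      have hdeg3 : ∀ a : {x // x ∈ V}, a.1 ∉ M → 3 ≤ H.degree a := by
        intro a haM
        by_contra hlt
        push_neg at hlt
        have hd12 : H.degree a = 1 ∨ H.degree a = 2 := by
          have := hdegpos a
          omega
        rcases hd12 with hdeg | hdeg
        · -- degree 1 : remove the leaf a
          obtain ⟨b, hb⟩ := Finset.card_eq_one.1 hdeg
          have hbadj : H.Adj a b := by
            rw [← SimpleGraph.mem_neighborFinset, hb]
            exact Finset.mem_singleton_self b
          have huniq : ∀ w, s(a.1, w) ∈ E → w = b.1 := by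
            intro w hw
            have hwV : w ∈ V := hEV _ hw _ (Sym2.mem_mk_right _ _)
            have hmem : (⟨w, hwV⟩ : {x // x ∈ V}) ∈ H.neighborFinset a :=
              (SimpleGraph.mem_neighborFinset _ _ _).2 hw
            rw [hb] at hmem
            exact congrArg Subtype.val (Finset.mem_singleton.1 hmem)
          have hba : b.1 ≠ a.1 := fun hh =>
            hND _ hbadj (Sym2.mk_isDiag_iff.2 hh.symm)
          have hEunused : ∀ e ∈ E.erase s(a.1, b.1), a.1 ∉ e := by
            intro e he hae
            obtain ⟨w, rfl⟩ := Sym2.mem_iff_exists.1 hae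
            have := huniq w (Finset.mem_of_mem_erase he)
            subst this
            exact (Finset.mem_erase.1 he).1 rfl
          have hmem : (V.erase a.1, E.erase s(a.1, b.1)) ∈ F := by
            refine memF _ _ (le_trans (Finset.erase_subset _ _) hVsub)
              (le_trans (Finset.erase_subset _ _) hEsub)
              (fun m hm => Finset.mem_erase.2 ⟨fun hh => haM (hh ▸ hm), hMV hm⟩)
              (fun e he x hx => Finset.mem_erase.2
                ⟨fun hh => hEunused e he (hh ▸ hx), hEV e (Finset.mem_of_mem_erase he) x hx⟩)
              (fun e he => hND e (Finset.mem_of_mem_erase he)) ?_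
            intro x hx y hy
            exact (rtg_erase_leaf huniq hba (hCON x (Finset.mem_of_mem_erase hx) y
              (Finset.mem_of_mem_erase hy)) (Finset.ne_of_mem_erase hx)).1
              (Finset.ne_of_mem_erase hy)
          have hcard := cardmin _ hmem (glen_mono (Finset.erase_subset _ _))
          rw [Finset.card_erase_of_mem a.2] at hcard
          omega
        · -- degree 2 : suppress a
          obtain ⟨b, c, hbc, hbcset⟩ := Finset.card_eq_two.1 hdeg
          have hbadj : H.Adj a b := by
            rw [← SimpleGraph.mem_neighborFinset, hbcset]
            exact Finset.mem_insert_self _ _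
          have hcadj : H.Adj a c := by
            rw [← SimpleGraph.mem_neighborFinset, hbcset]
            exact Finset.mem_insert_of_mem (Finset.mem_singleton_self c)
          have huniq : ∀ w, s(a.1, w) ∈ E → w = b.1 ∨ w = c.1 := by
            intro w hw
            have hwV : w ∈ V := hEV _ hw _ (Sym2.mem_mk_right _ _)
            have hmem : (⟨w, hwV⟩ : {x // x ∈ V}) ∈ H.neighborFinset a :=
              (SimpleGraph.mem_neighborFinset _ _ _).2 hw
            rw [hbcset] at hmem
            rcases Finset.mem_insert.1 hmem with hh | hh
            · exact Or.inl (congrArg Subtype.val hh)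
            · exact Or.inr (congrArg Subtype.val (Finset.mem_singleton.1 hh))
          have hba : b.1 ≠ a.1 := fun hh => hND _ hbadj (Sym2.mk_isDiag_iff.2 hh.symm)
          have hca : c.1 ≠ a.1 := fun hh => hND _ hcadj (Sym2.mk_isDiag_iff.2 hh.symm)
          have hbc' : b.1 ≠ c.1 := fun hh => hbc (Subtype.ext hh)
          set E' := insert s(b.1, c.1) ((E.erase s(a.1, b.1)).erase s(a.1, c.1)) with hE'def
          have hE''unused : ∀ e ∈ (E.erase s(a.1, b.1)).erase s(a.1, c.1), a.1 ∉ e := by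
            intro e he hae
            obtain ⟨w, rfl⟩ := Sym2.mem_iff_exists.1 hae
            have hememE : s(a.1, w) ∈ E :=
              Finset.mem_of_mem_erase (Finset.mem_of_mem_erase he)
            rcases huniq w hememE with rfl | rfl
            · exact (Finset.mem_erase.1 (Finset.mem_of_mem_erase he)).1 rfl
            · exact (Finset.mem_erase.1 he).1 rfl
          have hE'sub : ∀ e ∈ E', ∀ x ∈ e, x ∈ V.erase a.1 := by
            intro e he x hx
            rcases Finset.mem_insert.1 he with rfl | he'
            · rcases Sym2.mem_iff.1 hx with rfl | rfl
              · exact Finset.mem_erase.2 ⟨hba, b.2⟩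
              · exact Finset.mem_erase.2 ⟨hca, c.2⟩
            · refine Finset.mem_erase.2 ⟨fun hh => hE''unused e he' (hh ▸ hx), ?_⟩
              exact hEV e (Finset.mem_of_mem_erase (Finset.mem_of_mem_erase he')) x hx
          have hmem : (V.erase a.1, E') ∈ F := by
            refine memF _ _ (le_trans (Finset.erase_subset _ _) hVsub) ?_
              (fun m hm => Finset.mem_erase.2 ⟨fun hh => haM (hh ▸ hm), hMV hm⟩)
              hE'sub ?_ ?_
            · intro e he
              rcases Finset.mem_insert.1 he with rfl | he'
              · exact Finset.mk_mem_sym2_iff.2 ⟨hVsub b.2, hVsub c.2⟩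
              · exact hEsub (Finset.mem_of_mem_erase (Finset.mem_of_mem_erase he'))
            · intro e he
              rcases Finset.mem_insert.1 he with rfl | he'
              · exact fun hh => hbc' (Sym2.mk_isDiag_iff.1 hh)
              · exact hND e (Finset.mem_of_mem_erase (Finset.mem_of_mem_erase he'))
            · intro x hx y hy
              exact (rtg_erase_deg2 huniq hba hca (hCON x (Finset.mem_of_mem_erase hx) y
                (Finset.mem_of_mem_erase hy)) (Finset.ne_of_mem_erase hx)).1
                (Finset.ne_of_mem_erase hy)
          have hlen : glen E' ≤ glen E := by
            have he1 : s(a.1, b.1) ∈ E := hbadj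
            have he2 : s(a.1, c.1) ∈ E.erase s(a.1, b.1) := by
              refine Finset.mem_erase.2 ⟨?_, hcadj⟩
              intro hh
              rcases Sym2.eq_iff.1 hh with ⟨_, h2⟩ | ⟨h1, _⟩
              · exact hbc' (h2.symm ▸ rfl)
              · exact hba (h1.symm ▸ rfl)
            have hs1 := glen_erase he1
            have hs2 := glen_erase he2
            have htri : dist b.1 c.1 ≤ dist a.1 b.1 + dist a.1 c.1 := by
              rw [dist_comm a.1 b.1]
              exact dist_triangle _ _ _
            have hins := glen_insert_le ((E.erase s(a.1, b.1)).erase s(a.1, c.1)) b.1 c.1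
            rw [← hE'def] at hins
            linarith
          have hcard := cardmin _ hmem hlen
          rw [Finset.card_erase_of_mem a.2] at hcard
          omega
      -- counting in the tree H
      have hhand : ∑ a : {x // x ∈ V}, H.degree a = 2 * H.edgeFinset.card :=
        SimpleGraph.sum_degrees_eq_twice_card_edges H
      have hsum : ∑ a : {x // x ∈ V}, (if a.1 ∈ M then 1 else 3) ≤
          ∑ a : {x // x ∈ V}, H.degree a := by
        refine Finset.sum_le_sum ?_
        intro a _
        by_cases haM : a.1 ∈ M
        · simp only [haM, if_true]
          exact hdegpos a
        · simp only [haM, if_false]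
          exact hdeg3 a haM
      have hLHS : ∑ a : {x // x ∈ V}, (if a.1 ∈ M then 1 else 3) =
          (Finset.univ.filter (fun a : {x // x ∈ V} => a.1 ∈ M)).card * 1 +
            (Finset.univ.filter (fun a : {x // x ∈ V} => ¬ a.1 ∈ M)).card * 3 := by
        rw [Finset.sum_ite, Finset.sum_const, Finset.sum_const, smul_eq_mul, smul_eq_mul]
      have hsplit := Finset.card_filter_add_card_filter_not
        (s := (Finset.univ : Finset {x // x ∈ V})) (p := fun a => a.1 ∈ M)
      have hcardV : Fintype.card {x // x ∈ V} = V.card := Fintype.card_coe V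
      rw [Finset.card_univ, hcardV] at hsplit
      have hms : (Finset.univ.filter (fun a : {x // x ∈ V} => a.1 ∈ M)).card ≤ M.card := by
        refine Finset.card_le_card_of_injOn (fun a => a.1) ?_ ?_
        · intro a ha
          exact (Finset.mem_filter.1 ha).2
        · intro a _ b _ h
          exact Subtype.ext h
      omega
  refine ⟨⟨V, E, hEV, hND⟩, ⟨⟨hne, hCON⟩, fun m hm => hMV hm⟩, ?_, hfinal⟩
  exact lenmin _ hGF

theorem smt_attained {X : Type*} [MetricSpace X] [CompactSpace X]
    (M : Finset X) (hM : M.Nonempty) :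
    ∃ G : GraphOn X, G.Connects M ∧ G.length = smt X M := by
  classical
  set k := 2 * M.card with hk
  have hm1 : 1 ≤ M.card := hM.card_pos
  have hk2 : 2 ≤ k := by omega
  haveI : Nonempty (Fin k) := ⟨⟨0, by omega⟩⟩
  let ℓ : Finset (Sym2 (Fin k)) → (Fin k → X) → ℝ := fun E v =>
    ∑ e ∈ E, Sym2.lift ⟨fun i j => dist (v i) (v j), fun _ _ => dist_comm _ _⟩ e
  let Conn : Finset (Sym2 (Fin k)) → Prop := fun E =>
    ∀ i j : Fin k, Relation.ReflTransGen (fun a b => s(a, b) ∈ E) i j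
  let C : Set (Fin k → X) := {v | ∀ m ∈ M, ∃ i, v i = m}
  have hCclosed : IsClosed C := by
    have hCeq : C = ⋂ m ∈ M, ⋃ i : Fin k, {v : Fin k → X | v i = m} := by
      ext v
      simp only [C, Set.mem_setOf_eq, Set.mem_iInter, Set.mem_iUnion]
    rw [hCeq]
    refine isClosed_biInter fun m _ => ?_
    refine isClosed_iUnion_of_finite fun i => ?_
    exact isClosed_eq (continuous_apply i) continuous_const
  have hCcpt : IsCompact C := hCclosed.isCompact
  have hCne : C.Nonempty := by
    obtain ⟨x₀, hx₀⟩ := hM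
    refine ⟨fun i => if h : (i : ℕ) < M.card then (M.equivFin.symm ⟨i, h⟩ : X) else x₀, ?_⟩
    intro m hm
    set j := M.equivFin ⟨m, hm⟩ with hj
    have hjk : (j : ℕ) < k := by have := j.2; omega
    refine ⟨⟨(j : ℕ), hjk⟩, ?_⟩
    have hcond : ((⟨(j : ℕ), hjk⟩ : Fin k) : ℕ) < M.card := j.2
    show (if h : ((⟨(j : ℕ), hjk⟩ : Fin k) : ℕ) < M.card then
        (M.equivFin.symm ⟨((⟨(j : ℕ), hjk⟩ : Fin k) : ℕ), h⟩ : X) else x₀) = m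
    rw [dif_pos hcond]
    have heq : M.equivFin.symm ⟨((⟨(j : ℕ), hjk⟩ : Fin k) : ℕ), hcond⟩ = ⟨m, hm⟩ := by
      rw [show (⟨((⟨(j : ℕ), hjk⟩ : Fin k) : ℕ), hcond⟩ : Fin M.card) = j from rfl, hj,
        Equiv.symm_apply_apply]
    rw [heq]
  have hℓcont : ∀ E, Continuous (ℓ E) := by
    intro E
    refine continuous_finset_sum _ ?_
    intro e _
    induction e using Sym2.ind with
    | _ i j =>
      simp only [Sym2.lift_mk]
      exact Continuous.dist (continuous_apply i) (continuous_apply j)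
  have hEx : ∀ E : Finset (Sym2 (Fin k)), ∃ v ∈ C, ∀ w ∈ C, ℓ E v ≤ ℓ E w := by
    intro E
    obtain ⟨v, hvC, hvmin⟩ := hCcpt.exists_isMinOn hCne (hℓcont E).continuousOn
    exact ⟨v, hvC, fun w hw => hvmin hw⟩
  choose vE hvEC hvEmin using hEx
  have hEall : Conn (Finset.univ : Finset (Sym2 (Fin k))) := fun i j =>
    Relation.ReflTransGen.single (Finset.mem_univ _)
  obtain ⟨E₀, hE₀mem, hE₀min⟩ := (Finset.univ.filter Conn).exists_min_image
    (fun E => ℓ E (vE E)) ⟨Finset.univ, Finset.mem_filter.2 ⟨Finset.mem_univ _, hEall⟩⟩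
  have hE₀conn : Conn E₀ := (Finset.mem_filter.1 hE₀mem).2
  set v₀ := vE E₀ with hv₀
  set μ := ℓ E₀ v₀ with hμ
  have hkey : ∀ E, Conn E → ∀ v ∈ C, μ ≤ ℓ E v := by
    intro E hE v hv
    exact le_trans (hE₀min E (Finset.mem_filter.2 ⟨Finset.mem_univ _, hE⟩)) (hvEmin E v hv)
  let GR : GraphOn X :=
    { verts := Finset.univ.image v₀
      edges := (E₀.image (Sym2.map v₀)).filter (fun e => ¬ e.IsDiag)
      mem_verts_of_mem_edges := by
        intro e he x hx
        obtain ⟨e', _, rfl⟩ := Finset.mem_image.1 (Finset.mem_filter.1 he).1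
        obtain ⟨i, _, rfl⟩ := Sym2.mem_map.1 hx
        exact Finset.mem_image.2 ⟨i, Finset.mem_univ _, rfl⟩
      not_isDiag := fun e he => (Finset.mem_filter.1 he).2 }
  have hGRconn : GR.Connects M := by
    constructor
    · constructor
      · exact ⟨v₀ ⟨0, by omega⟩, Finset.mem_image.2 ⟨_, Finset.mem_univ _, rfl⟩⟩
      · intro x hx y hy
        obtain ⟨i, hiu, rfl⟩ := Finset.mem_image.1 hx
        obtain ⟨j, hju, rfl⟩ := Finset.mem_image.1 hy
        have habs := hE₀conn i j
        clear hiu hju hx hy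
        induction habs with
        | refl => exact .refl
        | @tail b c hab hbc ih =>
          by_cases hvb : v₀ b = v₀ c
          · exact hvb ▸ ih
          · refine ih.tail ?_
            show s(v₀ b, v₀ c) ∈ GR.edges
            refine Finset.mem_filter.2
              ⟨Finset.mem_image.2 ⟨s(b, c), hbc, Sym2.map_pair_eq _ _ _⟩, ?_⟩
            exact fun hd => hvb (Sym2.mk_isDiag_iff.1 hd)
    · intro m hm
      obtain ⟨i, hi⟩ := hvEC E₀ m hm
      exact Finset.mem_image.2 ⟨i, Finset.mem_univ _, hi⟩
  have hGRlen : GR.length ≤ μ := by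
    have h1 : GR.length ≤ ∑ e ∈ E₀.image (Sym2.map v₀),
        Sym2.lift ⟨fun x y => dist x y, fun _ _ => dist_comm _ _⟩ e :=
      Finset.sum_le_sum_of_subset_of_nonneg (Finset.filter_subset _ _)
        (fun e _ _ => sym2_dist_nonneg e)
    have h2 := sum_image_le' E₀ (Sym2.map v₀)
      (fun e => Sym2.lift ⟨fun x y => dist x y, fun _ _ => dist_comm _ _⟩ e)
      (fun e => sym2_dist_nonneg e)
    have h3 : ∀ e : Sym2 (Fin k),
        Sym2.lift ⟨fun x y => dist x y, fun _ _ => dist_comm _ _⟩ (Sym2.map v₀ e) =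
          Sym2.lift ⟨fun i j => dist (v₀ i) (v₀ j), fun _ _ => dist_comm _ _⟩ e := by
      intro e
      induction e using Sym2.ind with
      | _ i j => simp [Sym2.map_pair_eq, Sym2.lift_mk]
    calc GR.length ≤ _ := h1
      _ ≤ ∑ e ∈ E₀, Sym2.lift ⟨fun x y => dist x y, fun _ _ => dist_comm _ _⟩
          (Sym2.map v₀ e) := h2
      _ = μ := Finset.sum_congr rfl (fun e _ => h3 e)
  have habstract : ∀ G : GraphOn X, G.Connects M → G.verts.card ≤ k → μ ≤ G.length := by
    intro G hG hcard
    haveI : Fintype {x // x ∈ G.verts} := FinsetCoe.fintype _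
    have hcard' : Fintype.card {x // x ∈ G.verts} ≤ Fintype.card (Fin k) := by
      rw [Fintype.card_coe, Fintype.card_fin]
      exact hcard
    obtain ⟨f⟩ := Function.Embedding.nonempty_of_card_le hcard'
    obtain ⟨x₀, hx₀⟩ := hG.1.1
    set Fm : X → Fin k := fun x => if hx : x ∈ G.verts then f ⟨x, hx⟩ else f ⟨x₀, hx₀⟩ with hFm
    set g : Fin k → X := fun i =>
      if h : ∃ w : {x // x ∈ G.verts}, f w = i then (h.choose : X) else x₀ with hg
    have hgF : ∀ x (hx : x ∈ G.verts), g (Fm x) = x := by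
      intro x hx
      have hFmx : Fm x = f ⟨x, hx⟩ := dif_pos hx
      have hex : ∃ w : {x // x ∈ G.verts}, f w = f ⟨x, hx⟩ := ⟨⟨x, hx⟩, rfl⟩
      rw [hFmx, hg]
      simp only
      rw [dif_pos hex]
      exact congrArg Subtype.val (f.injective hex.choose_spec)
    have hgpad : ∀ i : Fin k, (¬∃ w : {x // x ∈ G.verts}, f w = i) → g i = x₀ :=
      fun i h => dif_neg h
    set E1 : Finset (Sym2 (Fin k)) := G.edges.image (Sym2.map Fm) with hE1
    set pad : Finset (Sym2 (Fin k)) :=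
      (Finset.univ.filter (fun i : Fin k => ¬∃ w : {x // x ∈ G.verts}, f w = i)).image
        (fun i => s(i, Fm x₀)) with hpad
    have hconnE : Conn (E1 ∪ pad) := by
      have hbase : ∀ i : Fin k,
          Relation.ReflTransGen (fun a b => s(a, b) ∈ E1 ∪ pad) i (Fm x₀) := by
        intro i
        by_cases hex : ∃ w : {x // x ∈ G.verts}, f w = i
        · obtain ⟨w, rfl⟩ := hex
          have hrtg := hG.1.2 w.1 w.2 x₀ hx₀
          have hstep : ∀ a b : X, G.Adj a b → s(Fm a, Fm b) ∈ E1 ∪ pad := by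
            intro a b hab
            exact Finset.mem_union_left _
              (Finset.mem_image.2 ⟨s(a, b), hab, Sym2.map_pair_eq _ _ _⟩)
          have hres : Relation.ReflTransGen (fun a b : Fin k => s(a, b) ∈ E1 ∪ pad) (Fm w.1) (Fm x₀) :=
            Relation.ReflTransGen.lift (r := G.Adj)
            (p := fun a b : Fin k => s(a, b) ∈ E1 ∪ pad) Fm hstep _ _ hrtg
          have hFw : Fm w.1 = f w := by
            rw [hFm]
            simp only
            rw [dif_pos w.2]
          rwa [hFw] at hres
        · exact Relation.ReflTransGen.single (Finset.mem_union_right _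
            (Finset.mem_image.2 ⟨i, Finset.mem_filter.2 ⟨Finset.mem_univ _, hex⟩, rfl⟩))
      intro i j
      have hsym : Symmetric (fun a b : Fin k => s(a, b) ∈ E1 ∪ pad) := fun a b h => swap_mem h
      exact (hbase i).trans ((@Relation.ReflTransGen.stdSymm _ _ ⟨hsym⟩).symm _ _ (hbase j))
    have hvC : g ∈ C := fun m hm => ⟨Fm m, hgF m (hG.2 m hm)⟩
    have hlen : ℓ (E1 ∪ pad) g ≤ G.length := by
      have hsplit := Finset.sum_union_inter (s₁ := E1) (s₂ := pad)
        (f := fun e => Sym2.lift ⟨fun i j => dist (g i) (g j), fun _ _ => dist_comm _ _⟩ e)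
      have hinter : 0 ≤ ∑ e ∈ E1 ∩ pad,
          Sym2.lift ⟨fun i j => dist (g i) (g j), fun _ _ => dist_comm _ _⟩ e :=
        Finset.sum_nonneg fun e _ => by
          induction e using Sym2.ind with
          | _ i j => simp [Sym2.lift_mk, dist_nonneg]
      have hE1le : ∑ e ∈ E1,
          Sym2.lift ⟨fun i j => dist (g i) (g j), fun _ _ => dist_comm _ _⟩ e ≤ G.length := by
        have h2 := sum_image_le' G.edges (Sym2.map Fm)
          (fun e => Sym2.lift ⟨fun i j => dist (g i) (g j), fun _ _ => dist_comm _ _⟩ e)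
          (fun e => by
            induction e using Sym2.ind with
            | _ i j => simp [Sym2.lift_mk, dist_nonneg])
        refine le_trans h2 (le_of_eq (Finset.sum_congr rfl ?_))
        intro e he
        revert he
        induction e using Sym2.ind with
        | _ a b =>
          intro he
          have ha := G.mem_verts_of_mem_edges _ he _ (Sym2.mem_mk_left _ _)
          have hb := G.mem_verts_of_mem_edges _ he _ (Sym2.mem_mk_right _ _)
          simp [Sym2.map_pair_eq, Sym2.lift_mk, hgF a ha, hgF b hb]
      have hpadle : ∑ e ∈ pad,
          Sym2.lift ⟨fun i j => dist (g i) (g j), fun _ _ => dist_comm _ _⟩ e ≤ 0 := by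
        have h2 := sum_image_le'
          (Finset.univ.filter (fun i : Fin k => ¬∃ w : {x // x ∈ G.verts}, f w = i))
          (fun i => s(i, Fm x₀))
          (fun e => Sym2.lift ⟨fun i j => dist (g i) (g j), fun _ _ => dist_comm _ _⟩ e)
          (fun e => by
            induction e using Sym2.ind with
            | _ i j => simp [Sym2.lift_mk, dist_nonneg])
        refine le_trans h2 (le_of_eq ?_)
        refine Finset.sum_eq_zero ?_
        intro i hi
        have hieq : g i = x₀ := hgpad i (Finset.mem_filter.1 hi).2
        simp [Sym2.lift_mk, hieq, hgF x₀ hx₀]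
      have hdef : ℓ (E1 ∪ pad) g = ∑ e ∈ E1 ∪ pad,
          Sym2.lift ⟨fun i j => dist (g i) (g j), fun _ _ => dist_comm _ _⟩ e := rfl
      rw [hdef]
      linarith
    exact le_trans (hkey _ hconnE g hvC) hlen
  have hbdd : BddBelow {l : ℝ | ∃ G' : GraphOn X, G'.Connects M ∧ l = G'.length} := by
    refine ⟨0, ?_⟩
    rintro l ⟨G', _, rfl⟩
    exact Finset.sum_nonneg fun e _ => sym2_dist_nonneg e
  have hsetne : {l : ℝ | ∃ G' : GraphOn X, G'.Connects M ∧ l = G'.length}.Nonempty :=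
    ⟨GR.length, GR, hGRconn, rfl⟩
  refine ⟨GR, hGRconn, le_antisymm ?_ ?_⟩
  · rw [smt]
    refine le_csInf hsetne ?_
    rintro l ⟨G', hG', rfl⟩
    obtain ⟨G'', hG''conn, hG''len, hG''card⟩ := exists_small M hM G' hG'
    calc GR.length ≤ μ := hGRlen
      _ ≤ G''.length := habstract G'' hG''conn hG''card
      _ ≤ G'.length := hG''len
  · rw [smt]
    exact csInf_le hbdd ⟨GR, hGRconn, rfl⟩

end SteinerAux


namespace SteinerAux2

open Metric Set GromovHausdorff

lemma diam_le_of_dist (p q : GHSpace) :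
    Metric.diam (Set.univ : Set p.Rep) ≤ Metric.diam (Set.univ : Set q.Rep) + 2 * dist p q := by
  have hd : hausdorffDist (range (optimalGHInjl p.Rep q.Rep))
      (range (optimalGHInjr p.Rep q.Rep)) = dist p q := by
    rw [hausdorffDist_optimal, ← dist_ghDist]
  set A := range (optimalGHInjl p.Rep q.Rep) with hA
  set B := range (optimalGHInjr p.Rep q.Rep) with hB
  have hAne : A.Nonempty := range_nonempty _
  have hBne : B.Nonempty := range_nonempty _
  have hABfin : EMetric.hausdorffEdist A B ≠ ⊤ :=
    hausdorffEdist_ne_top_of_nonempty_of_bounded hAne hBne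
      (isCompact_range (isometry_optimalGHInjl p.Rep q.Rep).continuous).isBounded
      (isCompact_range (isometry_optimalGHInjr p.Rep q.Rep).continuous).isBounded
  refine Metric.diam_le_of_forall_dist_le (by positivity) ?_
  intro x _ y _
  refine le_of_forall_pos_le_add ?_
  intro ε hε
  have hlt : hausdorffDist A B < dist p q + ε / 2 := by rw [hd]; linarith
  obtain ⟨x', hx'B, hxx'⟩ :=
    exists_dist_lt_of_hausdorffDist_lt (mem_range_self (f := optimalGHInjl p.Rep q.Rep) x)
      hlt hABfin
  obtain ⟨y', hy'B, hyy'⟩ :=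
    exists_dist_lt_of_hausdorffDist_lt (mem_range_self (f := optimalGHInjl p.Rep q.Rep) y)
      hlt hABfin
  have hBdiam : dist x' y' ≤ Metric.diam (univ : Set q.Rep) := by
    have hiso : Metric.diam B = Metric.diam (univ : Set q.Rep) :=
      Isometry.diam_range (isometry_optimalGHInjr p.Rep q.Rep)
    rw [← hiso]
    exact dist_le_diam_of_mem
      (isCompact_range (isometry_optimalGHInjr p.Rep q.Rep).continuous).isBounded hx'B hy'B
  have hxy : dist x y = dist (optimalGHInjl p.Rep q.Rep x) (optimalGHInjl p.Rep q.Rep y) :=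
    ((isometry_optimalGHInjl p.Rep q.Rep).dist_eq x y).symm
  have htr : dist (optimalGHInjl p.Rep q.Rep x) (optimalGHInjl p.Rep q.Rep y) ≤
      dist (optimalGHInjl p.Rep q.Rep x) x' + dist x' y' +
        dist y' (optimalGHInjl p.Rep q.Rep y) := dist_triangle4 _ _ _ _
  rw [dist_comm y' (optimalGHInjl p.Rep q.Rep y)] at htr
  linarith

lemma exists_inj_of_close (p q : GHSpace) {m : ℕ} (f : Fin m → p.Rep)
    (hf : Function.Injective f) {δ : ℝ}
    (hsep : ∀ i j, i ≠ j → δ ≤ dist (f i) (f j))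
    (h : dist p q < δ / 2) : ∃ g : Fin m → q.Rep, Function.Injective g := by
  have hd : hausdorffDist (range (optimalGHInjl p.Rep q.Rep))
      (range (optimalGHInjr p.Rep q.Rep)) = dist p q := by
    rw [hausdorffDist_optimal, ← dist_ghDist]
  have hABfin : EMetric.hausdorffEdist (range (optimalGHInjl p.Rep q.Rep))
      (range (optimalGHInjr p.Rep q.Rep)) ≠ ⊤ :=
    hausdorffEdist_ne_top_of_nonempty_of_bounded (range_nonempty _) (range_nonempty _)
      (isCompact_range (isometry_optimalGHInjl p.Rep q.Rep).continuous).isBounded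
      (isCompact_range (isometry_optimalGHInjr p.Rep q.Rep).continuous).isBounded
  have hchoice : ∀ i : Fin m, ∃ z : q.Rep,
      dist (optimalGHInjl p.Rep q.Rep (f i)) (optimalGHInjr p.Rep q.Rep z) < δ / 2 := by
    intro i
    obtain ⟨y, hyB, hy⟩ := exists_dist_lt_of_hausdorffDist_lt
      (mem_range_self (f := optimalGHInjl p.Rep q.Rep) (f i)) (by rw [hd]; exact h) hABfin
    obtain ⟨z, rfl⟩ := hyB
    exact ⟨z, hy⟩
  choose g hg using hchoice
  refine ⟨g, ?_⟩
  intro i j hgij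
  by_contra hij
  have h1 := hsep i j hij
  have h2 : dist (f i) (f j) =
      dist (optimalGHInjl p.Rep q.Rep (f i)) (optimalGHInjl p.Rep q.Rep (f j)) :=
    ((isometry_optimalGHInjl p.Rep q.Rep).dist_eq _ _).symm
  have h3 : dist (optimalGHInjl p.Rep q.Rep (f i)) (optimalGHInjl p.Rep q.Rep (f j)) ≤
      dist (optimalGHInjl p.Rep q.Rep (f i)) (optimalGHInjr p.Rep q.Rep (g i)) +
        dist (optimalGHInjr p.Rep q.Rep (g i)) (optimalGHInjr p.Rep q.Rep (g j)) +
        dist (optimalGHInjr p.Rep q.Rep (g j)) (optimalGHInjl p.Rep q.Rep (f j)) :=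
    dist_triangle4 _ _ _ _
  have h4 : dist (optimalGHInjr p.Rep q.Rep (g i)) (optimalGHInjr p.Rep q.Rep (g j)) = 0 := by
    rw [(isometry_optimalGHInjr p.Rep q.Rep).dist_eq, hgij, dist_self]
  have h5 := hg i
  have h6 := hg j
  rw [dist_comm (optimalGHInjr p.Rep q.Rep (g j)) (optimalGHInjl p.Rep q.Rep (f j))] at h3
  linarith

theorem isCompact_MK (n : ℕ) (hn : 1 ≤ n) (d : ℝ) :
    IsCompact {p : GHSpace | (Finite p.Rep ∧ Nat.card p.Rep ≤ n) ∧
      Metric.diam (Set.univ : Set p.Rep) ≤ d} := by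
  classical
  apply TotallyBounded.isCompact_of_isClosed
  · apply GromovHausdorff.totallyBounded (C := d) (u := fun k => 1 / (k + 1)) (K := fun _ => n)
    · exact tendsto_one_div_add_atTop_nhds_zero_nat
    · exact fun p hp => hp.2
    · intro p hp k
      haveI := hp.1.1
      haveI : Fintype p.Rep := Fintype.ofFinite _
      refine ⟨Set.univ, ?_, ?_⟩
      · rw [Cardinal.mk_univ, Cardinal.mk_fintype]
        have : Fintype.card p.Rep ≤ n := by
          rw [← Nat.card_eq_fintype_card]
          exact hp.1.2
        exact_mod_cast this
      · intro x _
        refine mem_biUnion (mem_univ x) (mem_ball_self (by positivity))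
  · rw [← isOpen_compl_iff, Metric.isOpen_iff]
    intro p hp
    by_cases hdiam : Metric.diam (Set.univ : Set p.Rep) ≤ d
    · have hcard : ¬(Finite p.Rep ∧ Nat.card p.Rep ≤ n) := fun hc => hp ⟨hc, hdiam⟩
      have hf : ∃ f : Fin (n + 1) → p.Rep, Function.Injective f := by
        by_cases hfin : Finite p.Rep
        · haveI := hfin
          haveI : Fintype p.Rep := Fintype.ofFinite _
          have hcard' : n < Nat.card p.Rep := by
            by_contra hle
            push_neg at hle
            exact hcard ⟨hfin, hle⟩
          have hle : Fintype.card (Fin (n + 1)) ≤ Fintype.card p.Rep := by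
            rw [Nat.card_eq_fintype_card] at hcard'
            simpa using hcard'
          obtain ⟨f⟩ := Function.Embedding.nonempty_of_card_le hle
          exact ⟨f, f.injective⟩
        · haveI : Infinite p.Rep := not_finite_iff_infinite.1 hfin
          exact ⟨fun i => Infinite.natEmbedding p.Rep i.1,
            fun i j h => Fin.val_injective ((Infinite.natEmbedding p.Rep).injective h)⟩
      obtain ⟨f, hfinj⟩ := hf
      have hpairs : ((Finset.univ : Finset (Fin (n + 1) × Fin (n + 1))).filter
          (fun x => x.1 ≠ x.2)).Nonempty := by
        refine ⟨(⟨0, by omega⟩, ⟨1, by omega⟩), ?_⟩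
        simp only [Finset.mem_filter, Finset.mem_univ, true_and]
        intro hcontra
        have := congrArg Fin.val hcontra
        simp at this
      obtain ⟨pr, hprmem, hprmin⟩ := Finset.exists_min_image _
        (fun x : Fin (n + 1) × Fin (n + 1) => dist (f x.1) (f x.2)) hpairs
      have hδpos : 0 < dist (f pr.1) (f pr.2) :=
        dist_pos.2 (fun h => (Finset.mem_filter.1 hprmem).2 (hfinj h))
      refine ⟨dist (f pr.1) (f pr.2) / 2, by positivity, ?_⟩
      intro q hq hqmem
      rw [mem_ball] at hq
      obtain ⟨g, hginj⟩ := exists_inj_of_close p q f hfinj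
        (fun i j hij => hprmin (i, j)
          (by simp only [Finset.mem_filter, Finset.mem_univ, true_and]; exact hij))
        (by rw [dist_comm] at hq; linarith)
      haveI := hqmem.1.1
      have hcard2 := Nat.card_le_card_of_injective g hginj
      rw [Nat.card_eq_fintype_card (α := Fin (n + 1))] at hcard2
      simp only [Fintype.card_fin] at hcard2
      have := hqmem.1.2
      omega
    · refine ⟨(Metric.diam (Set.univ : Set p.Rep) - d) / 2,
        by linarith [not_le.1 hdiam], ?_⟩
      intro q hq hqmem
      rw [mem_ball] at hq
      have h1 := diam_le_of_dist p q
      have h2 := hqmem.2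
      rw [dist_comm] at hq
      linarith [not_le.1 hdiam]

end SteinerAux2


/-- For `n ≥ 1`, `d ≥ 0` and any nonempty finite subset `M` of the space `𝓜_n(d)` of all
(isometry classes of) compact metric spaces with at most `n` points and diameter at most `d`
(with the Gromov–Hausdorff metric), there is a Steiner minimal tree on `M` in `𝓜_n(d)`:
a connected graph `G` on `𝓜_n(d)` connecting `M` with `|G| = smt(M, 𝓜_n(d))`. -/
theorem SMT_nonempty_in_M_n_d (n : ℕ) (hn : 1 ≤ n) (d : ℝ) (hd : 0 ≤ d)
    (M : Finset {p : GromovHausdorff.GHSpace //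
      (Finite p.Rep ∧ Nat.card p.Rep ≤ n) ∧ Metric.diam (Set.univ : Set p.Rep) ≤ d})
    (hM : M.Nonempty) :
    ∃ G : GraphOn {p : GromovHausdorff.GHSpace //
        (Finite p.Rep ∧ Nat.card p.Rep ≤ n) ∧ Metric.diam (Set.univ : Set p.Rep) ≤ d},
      G.Connects M ∧ G.length = smt _ M := by
  haveI : CompactSpace {p : GromovHausdorff.GHSpace //
      (Finite p.Rep ∧ Nat.card p.Rep ≤ n) ∧ Metric.diam (Set.univ : Set p.Rep) ≤ d} :=
    isCompact_iff_compactSpace.mp (SteinerAux2.isCompact_MK n hn d)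
  exact SteinerAux.smt_attained M hM
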